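/- In the split-biquaternion algebra A = ℍ ⊕ ℍε with ε central and ε² = 1, if Q₁ = q_{r1} + q_{d1}ε and Q₂ = q_{r2} + q_{d2}ε both satisfy the orthogonality condition q_r q_d† + q_d q_r† = 0 and their product also satisfies this condition, then the norm is multiplicative: ‖Q₁Q₂‖ = ‖Q₁‖ ‖Q₂‖, where ‖Q‖² := Re(Q Q†) = ‖q_r‖² + ‖q_d‖². -/

import Mathlib

open Quaternion

/-- Multiplication in the split-biquaternion algebra `A = ℍ ⊕ ℍε`, where `ε`
is central and `ε² = +1`. -/
noncomputable def biqMul (Q P : Quaternion ℝ × Quaternion ℝ) : Quaternion ℝ × Quaternion ℝ :=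
  (Q.1 * P.1 + Q.2 * P.2, Q.1 * P.2 + Q.2 * P.1)

/-- The norm `‖Q‖ := √(‖q_r‖² + ‖q_d‖²)`, so that `‖Q‖² = Re(Q Q†)`. -/
noncomputable def biqNorm (Q : Quaternion ℝ × Quaternion ℝ) : ℝ :=
  Real.sqrt (‖Q.1‖ ^ 2 + ‖Q.2‖ ^ 2)

lemma biq_key (a b c d : ℍ) (h : c * star d + d * star c = 0) :
    Quaternion.normSq (a * c + b * d) + Quaternion.normSq (a * d + b * c)
      = (Quaternion.normSq a + Quaternion.normSq b) *
        (Quaternion.normSq c + Quaternion.normSq d) := by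
  have expand :
      (a * c + b * d) * star (a * c + b * d) + (a * d + b * c) * star (a * d + b * c)
        = a * (c * star c + d * star d) * star a + b * (c * star c + d * star d) * star b
          + a * (c * star d + d * star c) * star b + b * (c * star d + d * star c) * star a := by
    simp only [star_add, star_mul]
    noncomm_ring
  rw [h, mul_zero, zero_mul, mul_zero, zero_mul, add_zero, add_zero] at expand
  have expand' :
      (((Quaternion.normSq (a * c + b * d) + Quaternion.normSq (a * d + b * c) : ℝ)) : ℍ)
        = (((Quaternion.normSq a + Quaternion.normSq b) *
            (Quaternion.normSq c + Quaternion.normSq d) : ℝ) : ℍ) := by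
    set r : ℝ := Quaternion.normSq c + Quaternion.normSq d with hr
    push_cast
    rw [← Quaternion.self_mul_star (a * c + b * d), ← Quaternion.self_mul_star (a * d + b * c),
      expand, Quaternion.self_mul_star c, Quaternion.self_mul_star d, ← Quaternion.coe_add,
      ← hr]
    rw [show a * (r : ℍ) = (r : ℍ) * a from (Quaternion.coe_commutes r a).symm,
      show b * (r : ℍ) = (r : ℍ) * b from (Quaternion.coe_commutes r b).symm,
      mul_assoc, mul_assoc, Quaternion.self_mul_star a, Quaternion.self_mul_star b,
      ← mul_add, Quaternion.coe_commutes, ← Quaternion.coe_add, ← Quaternion.coe_mul]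
  have := Quaternion.coe_injective expand'
  linarith [this]

/-- If `Q₁`, `Q₂` and their product all satisfy the orthogonality condition
`q_r q_d† + q_d q_r† = 0`, then the norm is multiplicative:
`‖Q₁Q₂‖ = ‖Q₁‖ ‖Q₂‖`. -/
theorem biquaternion_norm_multiplicative
    (Q₁ Q₂ : Quaternion ℝ × Quaternion ℝ)
    (h₁ : Q₁.1 * star Q₁.2 + Q₁.2 * star Q₁.1 = 0)
    (h₂ : Q₂.1 * star Q₂.2 + Q₂.2 * star Q₂.1 = 0)
    (h₁₂ : (biqMul Q₁ Q₂).1 * star (biqMul Q₁ Q₂).2 +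
        (biqMul Q₁ Q₂).2 * star (biqMul Q₁ Q₂).1 = 0) :
    biqNorm (biqMul Q₁ Q₂) = biqNorm Q₁ * biqNorm Q₂ := by
  have key := biq_key Q₁.1 Q₁.2 Q₂.1 Q₂.2 h₂
  have hn : ∀ x : ℍ, ‖x‖ ^ 2 = Quaternion.normSq x := by
    intro x
    rw [Quaternion.normSq_eq_norm_mul_self, sq]
  unfold biqNorm biqMul
  simp only [hn]
  rw [key, Real.sqrt_mul (add_nonneg Quaternion.normSq_nonneg Quaternion.normSq_nonneg)]
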